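/- Let λ : ℤ₊ → ℝ satisfy (UB). For every t ≥ 0, every l ∈ ℤ₊ and every u ∈ ℂ, the series Σ_{x ∈ ℤ₊} e^{tL}(l, x) p_x(u) converges absolutely and equals e^{−tu} p_l(u); moreover the convergence is uniform for u in any compact subset of ℂ. -/

import Mathlib

open Complex MeasureTheory Finset
open scoped Real ComplexOrder

/-- ψ_x(w) = ∏_{k=0}^{x} λ(k)/(λ(k)−w). -/
noncomputable def psiF (lam : ℕ → ℝ) (x : ℕ) (w : ℂ) : ℂ :=
  ∏ k ∈ Finset.range (x + 1), (lam k : ℂ) / ((lam k : ℂ) - w)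

/-- p_x(w) = ∏_{k=0}^{x−1} (λ(k)−w)/λ(k). -/
noncomputable def pF (lam : ℕ → ℝ) (x : ℕ) (w : ℂ) : ℂ :=
  ∏ k ∈ Finset.range x, (((lam k : ℂ) - w) / (lam k : ℂ))

/-- e^{tL}(x,y) := −(1/λ(y))·(1/(2πi)) ∮_{|w|=R} ψ_y(w) p_x(w) e^{−tw} dw,
the contour being the counterclockwise circle of radius R centred at 0. -/
noncomputable def eL (lam : ℕ → ℝ) (R t : ℝ) (x y : ℕ) : ℂ :=
  -(1 / (lam y : ℂ)) * ((2 * (Real.pi : ℂ) * Complex.I)⁻¹ *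
    ∮ w in C(0, R), psiF lam y w * pF lam x w * Complex.exp (-(t : ℂ) * w))

/-! ### Auxiliary definitions and lemmas -/

/-- Q_n(w) = ∏_{k<n} (λ(k)−u)/(λ(k)−w). -/
noncomputable def QF (lam : ℕ → ℝ) (u : ℂ) (n : ℕ) (w : ℂ) : ℂ :=
  ∏ k ∈ Finset.range n, (((lam k : ℂ) - u) / ((lam k : ℂ) - w))

namespace Stmt19

theorem circleIntegral_add {f g : ℂ → ℂ} {c : ℂ} {R : ℝ} (hf : CircleIntegrable f c R)
    (hg : CircleIntegrable g c R) :
    (∮ z in C(c, R), (f z + g z)) = (∮ z in C(c, R), f z) + ∮ z in C(c, R), g z := by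
  simp only [circleIntegral, smul_add, intervalIntegral.integral_add hf.out hg.out]

variable {lam : ℕ → ℝ} {M : ℝ}

lemma normlam (hpos : ∀ x, 0 < lam x) (k : ℕ) : ‖(lam k : ℂ)‖ = lam k := by
  rw [Complex.norm_real, Real.norm_eq_abs, abs_of_pos (hpos k)]

lemma lam_ne (hpos : ∀ x, 0 < lam x) (k : ℕ) : (lam k : ℂ) ≠ 0 := by
  simpa using (hpos k).ne'

lemma sub_ne (hpos : ∀ x, 0 < lam x) (hub : ∀ x, lam x ≤ M) {w : ℂ} (hw : M < ‖w‖) (k : ℕ) :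
    (lam k : ℂ) - w ≠ 0 := by
  intro h; rw [sub_eq_zero] at h
  rw [← h, normlam hpos] at hw
  exact absurd (hub k) (not_le.mpr hw)

lemma diff_psiF (hpos : ∀ x, 0 < lam x) (hub : ∀ x, lam x ≤ M) (x : ℕ) {w : ℂ} (hw : M < ‖w‖) :
    DifferentiableAt ℂ (psiF lam x) w := by
  apply DifferentiableAt.fun_finsetProd
  intro k _
  exact (differentiableAt_const _).div
    ((differentiableAt_const _).sub differentiableAt_id) (sub_ne hpos hub hw k)

lemma diff_pF (l : ℕ) : Differentiable ℂ (pF lam l) := by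
  apply Differentiable.fun_finsetProd
  intro k _
  exact ((differentiable_const _).sub differentiable_id).div_const _

lemma diff_QF (hpos : ∀ x, 0 < lam x) (hub : ∀ x, lam x ≤ M) (u : ℂ) (n : ℕ) {w : ℂ}
    (hw : M < ‖w‖) : DifferentiableAt ℂ (QF lam u n) w := by
  apply DifferentiableAt.fun_finsetProd
  intro k _
  exact (differentiableAt_const _).div
    ((differentiableAt_const _).sub differentiableAt_id) (sub_ne hpos hub hw k)

lemma diff_exp (t : ℝ) : Differentiable ℂ (fun w : ℂ => Complex.exp (-(t:ℂ) * w)) :=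
  ((differentiable_const _).mul differentiable_id).cexp

lemma diff_core (hpos : ∀ x, 0 < lam x) (hub : ∀ x, lam x ≤ M) (t : ℝ) (l x : ℕ) {w : ℂ}
    (hw : M < ‖w‖) :
    DifferentiableAt ℂ (fun w => psiF lam x w * pF lam l w * Complex.exp (-(t:ℂ) * w)) w :=
  ((diff_psiF hpos hub x hw).mul ((diff_pF l) w)).mul ((diff_exp t) w)

lemma hMpos (hpos : ∀ x, 0 < lam x) (hub : ∀ x, lam x ≤ M) : 0 < M :=
  lt_of_lt_of_le (hpos 0) (hub 0)

/-- The operator `eL` does not depend on the choice of the radius `R > M`. -/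
lemma eL_indep (hpos : ∀ x, 0 < lam x) (hub : ∀ x, lam x ≤ M) {R1 R2 t : ℝ}
    (h1 : M < R1) (h2 : M < R2) (l x : ℕ) :
    eL lam R1 t l x = eL lam R2 t l x := by
  have key : ∀ r1 r2 : ℝ, M < r1 → r1 ≤ r2 →
      (∮ w in C(0, r2), psiF lam x w * pF lam l w * Complex.exp (-(t : ℂ) * w)) =
      ∮ w in C(0, r1), psiF lam x w * pF lam l w * Complex.exp (-(t : ℂ) * w) := by
    intro r1 r2 hr1 hle
    apply Complex.circleIntegral_eq_of_differentiable_on_annulus_off_countable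
      (lt_trans (hMpos hpos hub) hr1) hle Set.countable_empty
    · intro z hz
      have hz1 : r1 ≤ ‖z‖ := by
        have := hz.2
        simpa [Metric.mem_ball, Complex.dist_eq] using this
      exact (diff_core hpos hub t l x (lt_of_lt_of_le hr1 hz1)).continuousAt.continuousWithinAt
    · intro z hz
      have hz1 : r1 < ‖z‖ := by
        have := hz.1.2
        simpa [Metric.mem_closedBall, Complex.dist_eq] using this
      exact diff_core hpos hub t l x (lt_trans hr1 hz1)
  unfold eL
  rcases le_total R1 R2 with h | h
  · rw [key R1 R2 h1 h]
  · rw [key R2 R1 h2 h]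

lemma pointwise_id (hpos : ∀ k, 0 < lam k) (x : ℕ) (u w : ℂ) :
    pF lam x u / (lam x : ℂ) * psiF lam x w = QF lam u x w / ((lam x : ℂ) - w) := by
  have hl : ∀ k, (lam k : ℂ) ≠ 0 := lam_ne hpos
  unfold pF psiF QF
  rw [Finset.prod_range_succ]
  have hcomb : (∏ k ∈ Finset.range x, (((lam k : ℂ) - u) / (lam k : ℂ))) *
      (∏ k ∈ Finset.range x, ((lam k : ℂ) / ((lam k : ℂ) - w))) =
      ∏ k ∈ Finset.range x, (((lam k : ℂ) - u) / ((lam k : ℂ) - w)) := by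
    rw [← Finset.prod_mul_distrib]
    refine Finset.prod_congr rfl fun k _ => ?_
    rw [div_mul_div_comm, mul_comm ((lam k : ℂ) - u), mul_div_mul_left _ _ (hl k)]
  calc (∏ k ∈ Finset.range x, (((lam k : ℂ) - u) / (lam k : ℂ))) / (lam x : ℂ) *
        ((∏ k ∈ Finset.range x, ((lam k : ℂ) / ((lam k : ℂ) - w))) *
          ((lam x : ℂ) / ((lam x : ℂ) - w)))
      = (∏ k ∈ Finset.range x, (((lam k : ℂ) - u) / (lam k : ℂ))) *
        (∏ k ∈ Finset.range x, ((lam k : ℂ) / ((lam k : ℂ) - w))) *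
        ((lam x : ℂ) / ((lam x : ℂ) - w) / (lam x : ℂ)) := by ring
    _ = (∏ k ∈ Finset.range x, (((lam k : ℂ) - u) / ((lam k : ℂ) - w))) / ((lam x : ℂ) - w) := by
        rw [hcomb, div_div, mul_comm ((lam x : ℂ) - w), ← div_div, div_self (hl x), one_div,
          ← div_eq_mul_inv]

/-- Each term of the series as a single contour integral. -/
lemma term_eq (hpos : ∀ x, 0 < lam x) (hub : ∀ x, lam x ≤ M) {R' t : ℝ} (hR' : M < R')
    (l x : ℕ) (u : ℂ) :
    eL lam R' t l x * pF lam x u = -(2 * (Real.pi : ℂ) * Complex.I)⁻¹ *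
      ∮ w in C(0, R'), QF lam u x w * pF lam l w * Complex.exp (-(t : ℂ) * w) /
        ((lam x : ℂ) - w) := by
  have hR'0 : 0 < R' := lt_trans (hMpos hpos hub) hR'
  unfold eL
  rw [show -(1 / (lam x : ℂ)) * ((2 * (Real.pi : ℂ) * Complex.I)⁻¹ *
      (∮ w in C(0, R'), psiF lam x w * pF lam l w * Complex.exp (-(t : ℂ) * w))) * pF lam x u
    = -(2 * (Real.pi : ℂ) * Complex.I)⁻¹ * ((pF lam x u / (lam x : ℂ)) *
      ∮ w in C(0, R'), psiF lam x w * pF lam l w * Complex.exp (-(t : ℂ) * w)) by ring]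
  rw [← circleIntegral.integral_const_mul]
  congr 1
  apply circleIntegral.integral_congr hR'0.le
  intro w hw
  have hwn : ‖w‖ = R' := by simpa [Complex.dist_eq] using hw
  have h := pointwise_id hpos x u w
  calc pF lam x u / (lam x : ℂ) * (psiF lam x w * pF lam l w * Complex.exp (-(t : ℂ) * w))
      = (pF lam x u / (lam x : ℂ) * psiF lam x w) * pF lam l w *
          Complex.exp (-(t : ℂ) * w) := by ring
    _ = QF lam u x w * pF lam l w * Complex.exp (-(t : ℂ) * w) / ((lam x : ℂ) - w) := by
        rw [h]; ring

lemma sphere_norm {R' : ℝ} {z : ℂ} (hz : z ∈ Metric.sphere (0:ℂ) R') : ‖z‖ = R' := by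
  simpa [Complex.dist_eq] using hz

lemma sphere_ne_u {R' : ℝ} {z u : ℂ} (hz : z ∈ Metric.sphere (0:ℂ) R') (hu : ‖u‖ < R') :
    z - u ≠ 0 := by
  rw [sub_ne_zero]
  intro h
  rw [← h, sphere_norm hz] at hu
  exact lt_irrefl _ hu

lemma integrable_f1 (hpos : ∀ x, 0 < lam x) (hub : ∀ x, lam x ≤ M) {R' t : ℝ} (hR' : M < R')
    (l n : ℕ) {u : ℂ} (hu : ‖u‖ < R') :
    CircleIntegrable (fun w => QF lam u n w * pF lam l w * Complex.exp (-(t : ℂ) * w) /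
      (w - u)) 0 R' := by
  have hR'0 : 0 < R' := lt_trans (hMpos hpos hub) hR'
  apply ContinuousOn.circleIntegrable hR'0.le
  intro z hz
  have hzn : ‖z‖ = R' := sphere_norm hz
  have hzM : M < ‖z‖ := hzn ▸ hR'
  exact ((((diff_QF hpos hub u n hzM).mul ((diff_pF l) z)).mul ((diff_exp t) z)).div
    (differentiableAt_id.sub (differentiableAt_const u))
    (sphere_ne_u hz hu)).continuousAt.continuousWithinAt

lemma integrable_g (hpos : ∀ x, 0 < lam x) (hub : ∀ x, lam x ≤ M) {R' t : ℝ} (hR' : M < R')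
    (l n : ℕ) {u : ℂ} (hu : ‖u‖ < R') :
    CircleIntegrable (fun w => (QF lam u n w - 1) * pF lam l w * Complex.exp (-(t : ℂ) * w) /
      (w - u)) 0 R' := by
  have hR'0 : 0 < R' := lt_trans (hMpos hpos hub) hR'
  apply ContinuousOn.circleIntegrable hR'0.le
  intro z hz
  have hzn : ‖z‖ = R' := sphere_norm hz
  have hzM : M < ‖z‖ := hzn ▸ hR'
  exact (((((diff_QF hpos hub u n hzM).sub (differentiableAt_const 1)).mul
    ((diff_pF l) z)).mul ((diff_exp t) z)).div
    (differentiableAt_id.sub (differentiableAt_const u))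
    (sphere_ne_u hz hu)).continuousAt.continuousWithinAt

lemma integrable_h (hpos : ∀ x, 0 < lam x) (hub : ∀ x, lam x ≤ M) {R' t : ℝ} (hR' : M < R')
    (l n x : ℕ) (u : ℂ) :
    CircleIntegrable (fun w => QF lam u n w * pF lam l w * Complex.exp (-(t : ℂ) * w) /
      ((lam x : ℂ) - w)) 0 R' := by
  have hR'0 : 0 < R' := lt_trans (hMpos hpos hub) hR'
  apply ContinuousOn.circleIntegrable hR'0.le
  intro z hz
  have hzn : ‖z‖ = R' := sphere_norm hz
  have hzM : M < ‖z‖ := hzn ▸ hR'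
  exact ((((diff_QF hpos hub u n hzM).mul ((diff_pF l) z)).mul ((diff_exp t) z)).div
    ((differentiableAt_const _).sub differentiableAt_id)
    (sub_ne hpos hub hzM x)).continuousAt.continuousWithinAt

lemma integrable_f2 (hpos : ∀ x, 0 < lam x) (hub : ∀ x, lam x ≤ M) {R' t : ℝ} (hR' : M < R')
    (l : ℕ) {u : ℂ} (hu : ‖u‖ < R') :
    CircleIntegrable (fun w => pF lam l w * Complex.exp (-(t : ℂ) * w) / (w - u)) 0 R' := by
  have hR'0 : 0 < R' := lt_trans (hMpos hpos hub) hR'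
  apply ContinuousOn.circleIntegrable hR'0.le
  intro z hz
  exact ((((diff_pF l) z).mul ((diff_exp t) z)).div
    (differentiableAt_id.sub (differentiableAt_const u))
    (sphere_ne_u hz hu)).continuousAt.continuousWithinAt

/-- Closed formula for the partial sums. -/
lemma partial_sum_eq (hpos : ∀ x, 0 < lam x) (hub : ∀ x, lam x ≤ M) {R' t : ℝ} (hR' : M < R')
    (l : ℕ) {u : ℂ} (hu : ‖u‖ < R') (n : ℕ) :
    ∑ x ∈ Finset.range n, eL lam R' t l x * pF lam x u =
      -(2 * (Real.pi : ℂ) * Complex.I)⁻¹ *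
      ∮ w in C(0, R'), (QF lam u n w - 1) * pF lam l w * Complex.exp (-(t : ℂ) * w) /
        (w - u) := by
  have hR'0 : 0 < R' := lt_trans (hMpos hpos hub) hR'
  induction n with
  | zero => simp [QF, circleIntegral]
  | succ n ih =>
    rw [Finset.sum_range_succ, ih, term_eq hpos hub hR' l n u]
    have hadd : (∮ w in C(0, R'), (QF lam u (n+1) w - 1) * pF lam l w *
          Complex.exp (-(t : ℂ) * w) / (w - u)) =
        (∮ w in C(0, R'), (QF lam u n w - 1) * pF lam l w *
          Complex.exp (-(t : ℂ) * w) / (w - u)) +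
        ∮ w in C(0, R'), QF lam u n w * pF lam l w * Complex.exp (-(t : ℂ) * w) /
          ((lam n : ℂ) - w) := by
      rw [← circleIntegral_add (integrable_g hpos hub hR' l n hu)
        (integrable_h hpos hub hR' l n n u)]
      apply circleIntegral.integral_congr hR'0.le
      intro w hw
      have hwn : ‖w‖ = R' := sphere_norm hw
      have hwM : M < ‖w‖ := hwn ▸ hR'
      have h1 : (lam n : ℂ) - w ≠ 0 := sub_ne hpos hub hwM n
      have h2 : w - u ≠ 0 := sphere_ne_u hw hu
      show (QF lam u (n+1) w - 1) * pF lam l w * Complex.exp (-(t : ℂ) * w) / (w - u) = _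
      have hQ : QF lam u (n+1) w = QF lam u n w * (((lam n : ℂ) - u) / ((lam n : ℂ) - w)) := by
        unfold QF; rw [Finset.prod_range_succ]
      rw [hQ]
      field_simp
      ring
    rw [hadd]
    ring

/-- The Cauchy integral formula we need. -/
lemma cauchy_formula (t : ℝ) {R' : ℝ} (hR'0 : 0 < R') (l : ℕ) {u : ℂ} (hu : ‖u‖ < R') :
    (∮ w in C(0, R'), pF lam l w * Complex.exp (-(t : ℂ) * w) / (w - u)) =
      2 * (Real.pi : ℂ) * Complex.I * (Complex.exp (-(t : ℂ) * u) * pF lam l u) := by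
  have hu' : u ∈ Metric.ball (0 : ℂ) R' := by simpa [Complex.dist_eq] using hu
  have hd : Differentiable ℂ (fun w => pF lam l w * Complex.exp (-(t:ℂ) * w)) :=
    (diff_pF l).mul (diff_exp t)
  have h := (hd.diffContOnCl).circleIntegral_sub_inv_smul (c := 0) (R := R') hu'
  calc (∮ w in C(0, R'), pF lam l w * Complex.exp (-(t : ℂ) * w) / (w - u))
      = ∮ w in C(0, R'), (w - u)⁻¹ • (pF lam l w * Complex.exp (-(t : ℂ) * w)) := by
        apply circleIntegral.integral_congr hR'0.le
        intro w _
        simp only [smul_eq_mul, div_eq_mul_inv]; ring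
    _ = (2 * (Real.pi : ℂ) * Complex.I) • (pF lam l u * Complex.exp (-(t : ℂ) * u)) := h
    _ = 2 * (Real.pi : ℂ) * Complex.I * (Complex.exp (-(t : ℂ) * u) * pF lam l u) := by
        rw [smul_eq_mul]; ring

lemma norm_two_pi_I_inv : ‖(2 * (Real.pi : ℂ) * Complex.I)⁻¹‖ = (2 * Real.pi)⁻¹ := by
  simp [norm_inv, map_mul, Complex.norm_I, Complex.norm_real,
    abs_of_pos Real.pi_pos, Complex.norm_two]

lemma QF_bound (hpos : ∀ x, 0 < lam x) (hub : ∀ x, lam x ≤ M) {R' B : ℝ} (hR' : M < R')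
    {u z : ℂ} (hu : ‖u‖ ≤ B) (hz : ‖z‖ = R') (n : ℕ) :
    ‖QF lam u n z‖ ≤ ((M + B) / (R' - M)) ^ n := by
  have hB0 : 0 ≤ B := le_trans (norm_nonneg u) hu
  have hM0 : 0 < M := hMpos hpos hub
  unfold QF
  rw [norm_prod]
  calc ∏ k ∈ Finset.range n, ‖((lam k : ℂ) - u) / ((lam k : ℂ) - z)‖
      ≤ ∏ _k ∈ Finset.range n, ((M + B) / (R' - M)) := by
        apply Finset.prod_le_prod (fun k _ => norm_nonneg _)
        intro k _
        rw [norm_div]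
        apply div_le_div₀ (by positivity) _ (by linarith) _
        · calc ‖(lam k : ℂ) - u‖ ≤ ‖(lam k : ℂ)‖ + ‖u‖ := norm_sub_le _ _
            _ ≤ M + B := by rw [normlam hpos]; exact add_le_add (hub k) hu
        · calc R' - M ≤ ‖z‖ - ‖(lam k : ℂ)‖ := by
                rw [normlam hpos, hz]; linarith [hub k]
            _ ≤ ‖z - (lam k : ℂ)‖ := norm_sub_norm_le _ _
            _ = ‖(lam k : ℂ) - z‖ := norm_sub_rev _ _
    _ = ((M + B) / (R' - M)) ^ n := by rw [Finset.prod_const, Finset.card_range]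

lemma pF_bound {s : ℝ} (hs : 0 < s) (hlb : ∀ x, s ≤ lam x) (hub : ∀ x, lam x ≤ M)
    {R' : ℝ} (hR'0 : 0 < R') {z : ℂ} (hz : ‖z‖ = R') (l : ℕ) :
    ‖pF lam l z‖ ≤ ((M + R') / s) ^ l := by
  have hpos : ∀ x, 0 < lam x := fun x => lt_of_lt_of_le hs (hlb x)
  have hM0 : 0 < M := hMpos hpos hub
  unfold pF
  rw [norm_prod]
  calc ∏ k ∈ Finset.range l, ‖((lam k : ℂ) - z) / (lam k : ℂ)‖
      ≤ ∏ _k ∈ Finset.range l, ((M + R') / s) := by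
        apply Finset.prod_le_prod (fun k _ => norm_nonneg _)
        intro k _
        rw [norm_div]
        refine div_le_div₀ (by positivity) ?_ hs ?_
        · calc ‖(lam k : ℂ) - z‖ ≤ ‖(lam k : ℂ)‖ + ‖z‖ := norm_sub_le _ _
            _ ≤ M + R' := by rw [normlam hpos, hz]; exact add_le_add (hub k) le_rfl
        · rw [normlam hpos]; exact hlb k
    _ = ((M + R') / s) ^ l := by rw [Finset.prod_const, Finset.card_range]

lemma exp_bound {t R' : ℝ} (ht : 0 ≤ t) {z : ℂ} (hz : ‖z‖ = R') :
    ‖Complex.exp (-(t : ℂ) * z)‖ ≤ Real.exp (t * R') := by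
  rw [Complex.norm_exp]
  apply Real.exp_le_exp.mpr
  have h1 : |z.re| ≤ R' := hz ▸ Complex.abs_re_le_norm z
  have h2 : (-(t : ℂ) * z).re = -t * z.re := by simp
  rw [h2]
  nlinarith [abs_le.mp h1]

/-- The key geometric estimate for the partial sums. -/
lemma key_estimate (lam : ℕ → ℝ) (s M : ℝ) (hs : 0 < s)
    (hlb : ∀ x, s ≤ lam x) (hub : ∀ x, lam x ≤ M)
    (R : ℝ) (hR : M < R) (t : ℝ) (ht : 0 ≤ t) (l : ℕ) (B : ℝ) (hB : 0 ≤ B) :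
    ∃ A q : ℝ, 0 ≤ A ∧ 0 ≤ q ∧ q < 1 ∧ ∀ u : ℂ, ‖u‖ ≤ B → ∀ n : ℕ,
      ‖(∑ x ∈ Finset.range n, eL lam R t l x * pF lam x u) -
        Complex.exp (-(t : ℂ) * u) * pF lam l u‖ ≤ A * q ^ n := by
  have hpos : ∀ x, 0 < lam x := fun x => lt_of_lt_of_le hs (hlb x)
  have hM0 : 0 < M := hMpos hpos hub
  set R' : ℝ := R + M + B with hR'def
  have hR'M : M < R' := by dsimp [R']; linarith
  have hR'0 : 0 < R' := lt_trans hM0 hR'M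
  have hBR' : B < R' := by dsimp [R']; linarith
  set q : ℝ := (M + B) / (R' - M) with hqdef
  have hq0 : 0 ≤ q := by apply div_nonneg <;> [positivity; linarith]
  have hq1 : q < 1 := by
    rw [hqdef, div_lt_one (by linarith)]
    dsimp [R']; linarith
  set Cp : ℝ := ((M + R') / s) ^ l with hCpdef
  set Et : ℝ := Real.exp (t * R') with hEtdef
  set A : ℝ := (2 * Real.pi)⁻¹ * (2 * Real.pi * R' * (Cp * Et / (R' - B))) with hAdef
  have hCp0 : 0 ≤ Cp := by positivity
  have hEt0 : 0 < Et := Real.exp_pos _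
  have hRB : (0:ℝ) < R' - B := by linarith
  have hA0 : 0 ≤ A := by
    rw [hAdef]
    have := Real.pi_pos
    apply mul_nonneg (by positivity)
    apply mul_nonneg (by positivity)
    exact div_nonneg (mul_nonneg hCp0 hEt0.le) hRB.le
  refine ⟨A, q, hA0, hq0, hq1, fun u hu n => ?_⟩
  have huR' : ‖u‖ < R' := lt_of_le_of_lt hu hBR'
  -- switch to the bigger contour
  have hswitch : ∑ x ∈ Finset.range n, eL lam R t l x * pF lam x u =
      ∑ x ∈ Finset.range n, eL lam R' t l x * pF lam x u :=
    Finset.sum_congr rfl fun x _ => by rw [eL_indep hpos hub hR hR'M l x]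
  rw [hswitch, partial_sum_eq hpos hub hR'M l huR' n]
  -- split off the Cauchy part
  have hsplit : (∮ w in C(0, R'), (QF lam u n w - 1) * pF lam l w *
        Complex.exp (-(t : ℂ) * w) / (w - u)) =
      (∮ w in C(0, R'), QF lam u n w * pF lam l w * Complex.exp (-(t : ℂ) * w) / (w - u)) -
      ∮ w in C(0, R'), pF lam l w * Complex.exp (-(t : ℂ) * w) / (w - u) := by
    rw [← circleIntegral.integral_sub (integrable_f1 hpos hub hR'M l n huR')
      (integrable_f2 hpos hub hR'M l huR')]
    apply circleIntegral.integral_congr hR'0.le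
    intro w _
    show (QF lam u n w - 1) * pF lam l w * Complex.exp (-(t : ℂ) * w) / (w - u) = _
    ring
  rw [hsplit, cauchy_formula t hR'0 l huR']
  have h2pi : (2 * (Real.pi : ℂ) * Complex.I) ≠ 0 := by
    simp [Real.pi_ne_zero, Complex.I_ne_zero]
  have hcollapse : -(2 * (Real.pi : ℂ) * Complex.I)⁻¹ *
      ((∮ w in C(0, R'), QF lam u n w * pF lam l w * Complex.exp (-(t : ℂ) * w) / (w - u)) -
        2 * (Real.pi : ℂ) * Complex.I * (Complex.exp (-(t : ℂ) * u) * pF lam l u)) -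
      Complex.exp (-(t : ℂ) * u) * pF lam l u =
      -(2 * (Real.pi : ℂ) * Complex.I)⁻¹ *
      (∮ w in C(0, R'), QF lam u n w * pF lam l w * Complex.exp (-(t : ℂ) * w) / (w - u)) := by
    field_simp
    ring
  rw [hcollapse, neg_mul, norm_neg, norm_mul, norm_two_pi_I_inv]
  have hbound : ‖∮ w in C(0, R'), QF lam u n w * pF lam l w *
      Complex.exp (-(t : ℂ) * w) / (w - u)‖ ≤
      2 * Real.pi * R' * (q ^ n * Cp * Et / (R' - B)) := by
    apply circleIntegral.norm_integral_le_of_norm_le_const hR'0.le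
    intro z hz
    have hzn : ‖z‖ = R' := sphere_norm hz
    have hzu : R' - B ≤ ‖z - u‖ := by
      calc R' - B ≤ ‖z‖ - ‖u‖ := by rw [hzn]; linarith
        _ ≤ ‖z - u‖ := norm_sub_norm_le _ _
    rw [norm_div, norm_mul, norm_mul]
    have hQ : ‖QF lam u n z‖ ≤ q ^ n := by
      rw [hqdef]; exact QF_bound hpos hub hR'M hu hzn n
    have hP : ‖pF lam l z‖ ≤ Cp := by
      rw [hCpdef]; exact pF_bound hs hlb hub hR'0 hzn l
    have hE : ‖Complex.exp (-(t : ℂ) * z)‖ ≤ Et := by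
      rw [hEtdef]; exact exp_bound ht hzn
    have hqn : (0:ℝ) ≤ q ^ n := pow_nonneg hq0 n
    refine div_le_div₀ (mul_nonneg (mul_nonneg hqn hCp0) hEt0.le) ?_ hRB hzu
    exact mul_le_mul (mul_le_mul hQ hP (norm_nonneg _) hqn) hE (norm_nonneg _)
      (mul_nonneg hqn hCp0)
  calc (2 * Real.pi)⁻¹ * ‖∮ w in C(0, R'), QF lam u n w * pF lam l w *
        Complex.exp (-(t : ℂ) * w) / (w - u)‖
      ≤ (2 * Real.pi)⁻¹ * (2 * Real.pi * R' * (q ^ n * Cp * Et / (R' - B))) := by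
        apply mul_le_mul_of_nonneg_left hbound
        positivity
    _ = A * q ^ n := by rw [hAdef]; ring

end Stmt19

/-- for every t ≥ 0, l ∈ ℤ₊ and u ∈ ℂ, the series
Σ_{x≥0} e^{tL}(l,x) p_x(u) converges absolutely to e^{−tu} p_l(u), and the convergence
of the partial sums is uniform for u in any compact subset of ℂ. -/
theorem stmt_19 (lam : ℕ → ℝ) (s M : ℝ) (hs : 0 < s)
    (hlb : ∀ x, s ≤ lam x) (hub : ∀ x, lam x ≤ M)
    (R : ℝ) (hR : M < R) (t : ℝ) (ht : 0 ≤ t) (l : ℕ) :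
    (∀ u : ℂ,
      HasSum (fun x : ℕ => eL lam R t l x * pF lam x u)
        (Complex.exp (-(t : ℂ) * u) * pF lam l u) ∧
      Summable (fun x : ℕ => ‖eL lam R t l x * pF lam x u‖)) ∧
    ∀ K : Set ℂ, IsCompact K →
      TendstoUniformlyOn
        (fun (n : ℕ) (u : ℂ) => ∑ x ∈ Finset.range n, eL lam R t l x * pF lam x u)
        (fun u => Complex.exp (-(t : ℂ) * u) * pF lam l u) Filter.atTop K := by
  constructor
  · intro u
    obtain ⟨A, q, hA0, hq0, hq1, hkey⟩ :=
      Stmt19.key_estimate lam s M hs hlb hub R hR t ht l ‖u‖ (norm_nonneg u)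
    have hbd := hkey u le_rfl
    -- convergence of partial sums
    have hq_tend : Filter.Tendsto (fun n : ℕ => A * q ^ n) Filter.atTop (nhds 0) := by
      rw [show (0:ℝ) = A * 0 by ring]
      exact (tendsto_pow_atTop_nhds_zero_of_lt_one hq0 hq1).const_mul A
    have hTend : Filter.Tendsto
        (fun n => ∑ x ∈ Finset.range n, eL lam R t l x * pF lam x u) Filter.atTop
        (nhds (Complex.exp (-(t : ℂ) * u) * pF lam l u)) := by
      rw [tendsto_iff_dist_tendsto_zero]
      apply squeeze_zero (fun n => dist_nonneg) (fun n => ?_) hq_tend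
      rw [dist_eq_norm]
      exact hbd n
    -- absolute summability
    have hnorm_le : ∀ x : ℕ, ‖eL lam R t l x * pF lam x u‖ ≤ 2 * A * q ^ x := by
      intro x
      have h1 := hbd (x + 1)
      have h2 := hbd x
      have hterm : eL lam R t l x * pF lam x u =
          ((∑ y ∈ Finset.range (x+1), eL lam R t l y * pF lam y u) -
            Complex.exp (-(t : ℂ) * u) * pF lam l u) -
          ((∑ y ∈ Finset.range x, eL lam R t l y * pF lam y u) -
            Complex.exp (-(t : ℂ) * u) * pF lam l u) := by
        rw [Finset.sum_range_succ]; ring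
      rw [hterm]
      calc ‖_ - _‖ ≤ A * q ^ (x+1) + A * q ^ x := norm_sub_le_of_le h1 h2
        _ ≤ A * q ^ x + A * q ^ x := by
            have : q ^ (x+1) ≤ q ^ x := pow_le_pow_of_le_one hq0 hq1.le (by omega)
            have := mul_le_mul_of_nonneg_left this hA0
            linarith
        _ = 2 * A * q ^ x := by ring
    have hSummableNorm : Summable (fun x : ℕ => ‖eL lam R t l x * pF lam x u‖) := by
      apply Summable.of_nonneg_of_le (fun x => norm_nonneg _) hnorm_le
      exact ((summable_geometric_of_lt_one hq0 hq1).mul_left (2 * A))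
    have hSummable : Summable (fun x : ℕ => eL lam R t l x * pF lam x u) :=
      Summable.of_norm hSummableNorm
    have hHasSum := hSummable.hasSum
    have hTend' := hHasSum.tendsto_sum_nat
    have heq := tendsto_nhds_unique hTend' hTend
    exact ⟨heq ▸ hHasSum, hSummableNorm⟩
  · intro K hK
    obtain ⟨B, hB⟩ := hK.isBounded.subset_closedBall 0
    obtain ⟨A, q, hA0, hq0, hq1, hkey⟩ :=
      Stmt19.key_estimate lam s M hs hlb hub R hR t ht l (max B 0) (le_max_right _ _)
    rw [Metric.tendstoUniformlyOn_iff]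
    intro ε hε
    have hq_tend : Filter.Tendsto (fun n : ℕ => A * q ^ n) Filter.atTop (nhds 0) := by
      rw [show (0:ℝ) = A * 0 by ring]
      exact (tendsto_pow_atTop_nhds_zero_of_lt_one hq0 hq1).const_mul A
    filter_upwards [hq_tend.eventually (eventually_lt_nhds hε)] with n hn u hu
    have hu' : ‖u‖ ≤ max B 0 := by
      have := hB hu
      simp only [Metric.mem_closedBall, Complex.dist_eq, dist_zero_right] at this
      exact le_trans this (le_max_left _ _)
    rw [dist_comm, dist_eq_norm]
    exact lt_of_le_of_lt (hkey u hu' n) hn
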